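/- Let ε₀ > 0 and assume ε₀ ≤ u_x ≤ 1−ε₀ for all x ∈ 𝕋_n^d. Let x, y ∈ 𝕋_n^d, let f be a density with respect to μ and let h : Ω_n → ℝ satisfy ∇_{x,y} h ≡ 0. Then for any δ > 0, ∫ h (ω_y − ω_x) f dμ ≤ δ n² D_{x,y}(√f; μ) + (4/(δ ε₀² n²)) ∫ h² f dμ − (u_y − u_x) ∫ h ω_x ω_y f dμ. -/

import Mathlib

open Finset Real

/-- The discrete torus `𝕋_n^d = (ℤ/nℤ)^d`. -/
abbrev Torus (n d : ℕ) := Fin d → ZMod n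

/-- The configuration space `Ω_n = {0,1}^(𝕋_n^d)`. -/
abbrev Config (n d : ℕ) := Torus n d → Bool

/-- Occupation variable `η_x ∈ {0,1} ⊆ ℝ`. -/
noncomputable def occ {n d : ℕ} (η : Config n d) (x : Torus n d) : ℝ := if η x then 1 else 0

/-- The weight of the product Bernoulli measure `μ = ⊗_x Bern(u_x)`. -/
noncomputable def bern {n d : ℕ} [NeZero n] (u : Torus n d → ℝ) (η : Config n d) : ℝ :=
  ∏ x : Torus n d, if η x then u x else 1 - u x

/-- `ω_x = (η_x - u_x)/(u_x(1-u_x))`. -/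
noncomputable def om {n d : ℕ} (u : Torus n d → ℝ) (x : Torus n d) (η : Config n d) : ℝ :=
  (occ η x - u x) / (u x * (1 - u x))

/-- The configuration `η^{x,y}` obtained from `η` by exchanging the values at `x` and `y`. -/
def swapC {n d : ℕ} (x y : Torus n d) (η : Config n d) : Config n d :=
  fun z => if z = x then η y else if z = y then η x else η z

/-- `s_{x,y}(η) = η_x(1-η_y)/(u_x(1-u_y))`. -/
noncomputable def sxy {n d : ℕ} (u : Torus n d → ℝ) (x y : Torus n d) (η : Config n d) : ℝ :=
  occ η x * (1 - occ η y) / (u x * (1 - u y))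

lemma swapC_invol {n d : ℕ} (x y : Torus n d) : Function.Involutive (swapC x y) := by
  intro η; funext z; simp only [swapC]; split_ifs <;> simp_all

lemma swapC_eq_self {n d : ℕ} {x y : Torus n d} {η : Config n d} (hd : η x = η y) :
    swapC x y η = η := by
  funext z; simp only [swapC]; split_ifs <;> simp_all

lemma young_core' (k s s' c c' l C : ℝ)
    (hc : 0 < c) (hc' : 0 < c') (hl : 0 < l) (hC : 0 < C)
    (hq : 1 ≤ 2 * l * C * (c * c')) :
    k * (s' ^ 2 - s ^ 2) ≤ l * ((s' - s) ^ 2 * (c + c'))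
      + C * (k ^ 2 * (s ^ 2 * c + s' ^ 2 * c')) := by
  have hcc : 0 < c + c' := by linarith
  have key : 4 * (l * (c + c')) * (k * (s' ^ 2 - s ^ 2))
      ≤ 4 * (l * (c + c')) * (l * ((s' - s) ^ 2 * (c + c'))) + k ^ 2 * (s + s') ^ 2 := by
    nlinarith [sq_nonneg (2 * l * (c + c') * (s' - s) - k * (s + s'))]
  have t1 : 0 ≤ (2 * l * C * (c * c') - 1) * (k ^ 2 * (s ^ 2 + s' ^ 2)) := by
    apply mul_nonneg (by linarith); positivity
  have t2 : 0 ≤ (k * (s - s')) ^ 2 := sq_nonneg _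
  have t3 : 0 ≤ l * C * ((k * s) ^ 2 * c ^ 2) := by positivity
  have t4 : 0 ≤ l * C * ((k * s') ^ 2 * c' ^ 2) := by positivity
  have key2 : k ^ 2 * (s + s') ^ 2
      ≤ 4 * (l * (c + c')) * (C * (k ^ 2 * (s ^ 2 * c + s' ^ 2 * c'))) := by
    nlinarith [t1, t2, t3, t4]
  have h4 : (0:ℝ) < 4 * (l * (c + c')) := by positivity
  have hfin : 4 * (l * (c + c')) * (k * (s' ^ 2 - s ^ 2))
      ≤ 4 * (l * (c + c')) * (l * ((s' - s) ^ 2 * (c + c'))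
          + C * (k ^ 2 * (s ^ 2 * c + s' ^ 2 * c'))) := by nlinarith [key, key2]
  exact le_of_mul_le_mul_left hfin h4

noncomputable def gg (n d : ℕ) [NeZero n] (u : Torus n d → ℝ) (x y : Torus n d)
    (f h : Config n d → ℝ) (η : Config n d) : ℝ :=
  h η * (om u y η - om u x η) * f η * bern u η
    + (u y - u x) * (h η * om u x η * om u y η * f η * bern u η)

noncomputable def GG (n d : ℕ) [NeZero n] (u : Torus n d → ℝ) (x y : Torus n d)
    (f h : Config n d → ℝ) (ε₀ δ : ℝ) (η : Config n d) : ℝ :=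
  δ * (n : ℝ) ^ 2 * ((Real.sqrt (f (swapC x y η)) - Real.sqrt (f η)) ^ 2 * bern u η)
    + (4 / (δ * ε₀ ^ 2 * (n : ℝ) ^ 2)) * ((h η) ^ 2 * f η * bern u η)

lemma bern_pos {n d : ℕ} [NeZero n] {ε₀ : ℝ} (hε₀ : 0 < ε₀)
    {u : Torus n d → ℝ} (hu : ∀ x, ε₀ ≤ u x ∧ u x ≤ 1 - ε₀) (η : Config n d) :
    0 < bern u η := by
  apply Finset.prod_pos
  intro z _
  rcases hu z with ⟨h1, h2⟩
  by_cases hz : η z <;> simp [hz] <;> linarith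

lemma GG_nonneg (n d : ℕ) [NeZero n] {ε₀ : ℝ} (hε₀ : 0 < ε₀)
    {u : Torus n d → ℝ} (hu : ∀ x, ε₀ ≤ u x ∧ u x ≤ 1 - ε₀) (x y : Torus n d)
    {f : Config n d → ℝ} (hf : ∀ η, 0 ≤ f η) (h : Config n d → ℝ)
    {δ : ℝ} (hδ : 0 < δ) (η : Config n d) :
    0 ≤ GG n d u x y f h ε₀ δ η := by
  have hb := (bern_pos hε₀ hu η).le
  have t1 : (0:ℝ) ≤ δ * (n : ℝ) ^ 2 := by positivity
  have t3 : (0:ℝ) ≤ 4 / (δ * ε₀ ^ 2 * (n : ℝ) ^ 2) := by positivity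
  exact add_nonneg (mul_nonneg t1 (mul_nonneg (sq_nonneg _) hb))
    (mul_nonneg t3 (mul_nonneg (mul_nonneg (sq_nonneg _) (hf η)) hb))

lemma diag_case (n d : ℕ) [NeZero n] {ε₀ : ℝ} (hε₀ : 0 < ε₀)
    {u : Torus n d → ℝ} (hu : ∀ x, ε₀ ≤ u x ∧ u x ≤ 1 - ε₀) (x y : Torus n d)
    {f : Config n d → ℝ} (hf : ∀ η, 0 ≤ f η) (h : Config n d → ℝ)
    {δ : ℝ} (hδ : 0 < δ) (η : Config n d) (hd : η x = η y) :
    gg n d u x y f h η + gg n d u x y f h (swapC x y η)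
      ≤ GG n d u x y f h ε₀ δ η + GG n d u x y f h ε₀ δ (swapC x y η) := by
  have hT : swapC x y η = η := swapC_eq_self hd
  rw [hT]
  have ha0 : 0 < u x := lt_of_lt_of_le hε₀ (hu x).1
  have ha1 : u x < 1 := by have := (hu x).2; linarith
  have hb0 : 0 < u y := lt_of_lt_of_le hε₀ (hu y).1
  have hb1 : u y < 1 := by have := (hu y).2; linarith
  have ha0' : u x ≠ 0 := ne_of_gt ha0
  have ha1' : (1:ℝ) - u x ≠ 0 := by linarith
  have hb0' : u y ≠ 0 := ne_of_gt hb0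
  have hb1' : (1:ℝ) - u y ≠ 0 := by linarith
  have hE : (om u y η - om u x η) + (u y - u x) * (om u x η * om u y η) = 0 := by
    cases hb : η x with
    | false =>
      have hby : η y = false := hd.symm.trans hb
      simp only [om, occ, hb, hby, if_false, Bool.false_eq_true]
      field_simp
      ring
    | true =>
      have hby : η y = true := hd.symm.trans hb
      simp only [om, occ, hb, hby, if_true]
      field_simp
      ring
  have hg0 : gg n d u x y f h η = 0 := by
    simp only [gg]
    linear_combination (h η * f η * bern u η) * hE
  rw [hg0]
  have := GG_nonneg n d hε₀ hu x y hf h hδ η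
  linarith

lemma main_case (n d : ℕ) [NeZero n] {ε₀ : ℝ} (hε₀ : 0 < ε₀)
    {u : Torus n d → ℝ} (hu : ∀ x, ε₀ ≤ u x ∧ u x ≤ 1 - ε₀) (x y : Torus n d)
    {f : Config n d → ℝ} (hf : ∀ η, 0 ≤ f η) {h : Config n d → ℝ}
    (hh : ∀ η, h (swapC x y η) - h η = 0)
    {δ : ℝ} (hδ : 0 < δ) (η : Config n d) (hx : η x = true) (hy : η y = false) :
    gg n d u x y f h η + gg n d u x y f h (swapC x y η)
      ≤ GG n d u x y f h ε₀ δ η + GG n d u x y f h ε₀ δ (swapC x y η) := by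
  have hn : (0:ℝ) < (n : ℝ) := by
    exact_mod_cast Nat.pos_of_ne_zero (NeZero.ne n)
  have hxy : x ≠ y := by intro e; rw [e, hy] at hx; exact Bool.noConfusion hx
  set η' := swapC x y η with hη'def
  have hη'x : η' x = false := by simp [hη'def, swapC, hy]
  have hη'y : η' y = true := by simp [hη'def, swapC, Ne.symm hxy, hx]
  have hη'' : swapC x y η' = η := swapC_invol x y η
  have hhη' : h η' = h η := by have := hh η; rw [← hη'def] at this; linarith
  have hyx : y ∈ (Finset.univ : Finset (Torus n d)).erase x :=
    Finset.mem_erase.mpr ⟨Ne.symm hxy, Finset.mem_univ y⟩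
  set R := ∏ z ∈ (Finset.univ.erase x).erase y, (if η z then u z else 1 - u z) with hRdef
  have hR : 0 < R := by
    apply Finset.prod_pos
    intro z _
    rcases (hu z) with ⟨h1, h2⟩
    by_cases hz : η z <;> simp [hz] <;> linarith
  have hm : bern u η = u x * ((1 - u y) * R) := by
    unfold bern
    rw [← Finset.mul_prod_erase _ _ (Finset.mem_univ x), ← Finset.mul_prod_erase _ _ hyx]
    simp [hx, hy, hRdef]
  have hm' : bern u η' = (1 - u x) * (u y * R) := by
    unfold bern
    rw [← Finset.mul_prod_erase _ _ (Finset.mem_univ x), ← Finset.mul_prod_erase _ _ hyx]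
    rw [hη'x, hη'y]
    have htail : ∏ z ∈ (Finset.univ.erase x).erase y, (if η' z then u z else 1 - u z) = R := by
      rw [hRdef]
      apply Finset.prod_congr rfl
      intro z hz
      obtain ⟨hzy, hz2⟩ := Finset.mem_erase.mp hz
      obtain ⟨hzx, _⟩ := Finset.mem_erase.mp hz2
      simp [hη'def, swapC, hzx, hzy]
    simp [htail]
  have ha0 : 0 < u x := lt_of_lt_of_le hε₀ (hu x).1
  have ha1 : u x < 1 := by have := (hu x).2; linarith
  have hb0 : 0 < u y := lt_of_lt_of_le hε₀ (hu y).1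
  have hb1 : u y < 1 := by have := (hu y).2; linarith
  have ha0' : u x ≠ 0 := ne_of_gt ha0
  have ha1' : (1:ℝ) - u x ≠ 0 := by linarith
  have hb0' : u y ≠ 0 := ne_of_gt hb0
  have hb1' : (1:ℝ) - u y ≠ 0 := by linarith
  -- bounds needed for the core inequality
  have h2ε : 2 * ε₀ ≤ 1 := by have := (hu x).1; have := (hu x).2; linarith
  have hax : ε₀ / 2 ≤ u x * (1 - u x) := by nlinarith [(hu x).1, (hu x).2]
  have hay : ε₀ / 2 ≤ u y * (1 - u y) := by nlinarith [(hu y).1, (hu y).2]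
  have hab : (ε₀ / 2) * (ε₀ / 2) ≤ (u x * (1 - u x)) * (u y * (1 - u y)) :=
    mul_le_mul hax hay (by positivity) (le_trans (by positivity) hax)
  have hq : 1 ≤ 2 * (δ * (n : ℝ) ^ 2) * (4 / (δ * ε₀ ^ 2 * (n : ℝ) ^ 2))
      * ((u x * (1 - u y)) * ((1 - u x) * u y)) := by
    have e : 2 * (δ * (n : ℝ) ^ 2) * (4 / (δ * ε₀ ^ 2 * (n : ℝ) ^ 2)) = 8 / ε₀ ^ 2 := by
      field_simp
      ring
    rw [e, div_mul_eq_mul_div, le_div_iff₀ (by positivity)]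
    nlinarith [hab]
  have core := young_core' (h η) (Real.sqrt (f η)) (Real.sqrt (f η'))
    (u x * (1 - u y)) ((1 - u x) * u y) (δ * (n : ℝ) ^ 2) (4 / (δ * ε₀ ^ 2 * (n : ℝ) ^ 2))
    (mul_pos ha0 (by linarith)) (mul_pos (by linarith) hb0) (by positivity) (by positivity) hq
  rw [Real.sq_sqrt (hf η), Real.sq_sqrt (hf η')] at core
  have core2 := mul_le_mul_of_nonneg_right core hR.le
  have hL : gg n d u x y f h η + gg n d u x y f h η'
      = h η * (f η' - f η) * R := by
    simp only [gg, om, occ, hx, hy, hη'x, hη'y, if_true, if_false, Bool.false_eq_true]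
    rw [hm, hm', hhη']
    field_simp
    ring
  have hG : GG n d u x y f h ε₀ δ η + GG n d u x y f h ε₀ δ η'
      = (δ * (n : ℝ) ^ 2 * ((Real.sqrt (f η') - Real.sqrt (f η)) ^ 2
            * (u x * (1 - u y) + (1 - u x) * u y))
          + (4 / (δ * ε₀ ^ 2 * (n : ℝ) ^ 2)) * ((h η) ^ 2
            * (f η * (u x * (1 - u y)) + f η' * ((1 - u x) * u y)))) * R := by
    simp only [GG]
    rw [hη'', hm, hm', hhη']
    ring
  rw [hL, hG]
  calc h η * (f η' - f η) * R = h η * (f η' - f η) * R := rfl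
    _ ≤ _ := by
        have : h η * (f η' - f η) * R = (h η * (f η' - f η)) * R := by ring
        rw [this]
        exact core2

/-- Lemma G.3: if `ε₀ ≤ u ≤ 1-ε₀` and `∇_{x,y} h ≡ 0` then for any `δ > 0`,
`∫ h(ω_y-ω_x) f dμ ≤ δ n² D_{x,y}(√f;μ) + (4/(δ ε₀² n²)) ∫ h² f dμ
  - (u_y-u_x) ∫ h ω_x ω_y f dμ`. -/
theorem ibp_combined (n d : ℕ) [NeZero n] (ε₀ : ℝ) (hε₀ : 0 < ε₀)
    (u : Torus n d → ℝ) (hu : ∀ x, ε₀ ≤ u x ∧ u x ≤ 1 - ε₀)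
    (x y : Torus n d)
    (f : Config n d → ℝ) (hf : ∀ η, 0 ≤ f η) (hf1 : ∑ η : Config n d, f η * bern u η = 1)
    (h : Config n d → ℝ) (hh : ∀ η, h (swapC x y η) - h η = 0)
    (δ : ℝ) (hδ : 0 < δ) :
    ∑ η : Config n d, h η * (om u y η - om u x η) * f η * bern u η
      ≤ δ * (n : ℝ) ^ 2 * (∑ η : Config n d,
              (Real.sqrt (f (swapC x y η)) - Real.sqrt (f η)) ^ 2 * bern u η)
        + (4 / (δ * ε₀ ^ 2 * (n : ℝ) ^ 2)) * (∑ η : Config n d, (h η) ^ 2 * f η * bern u η)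
        - (u y - u x) * ∑ η : Config n d, h η * om u x η * om u y η * f η * bern u η := by
  classical
  have hinv : ∀ η : Config n d, swapC x y (swapC x y η) = η := swapC_invol x y
  have hpoint : ∀ η : Config n d,
      gg n d u x y f h η + gg n d u x y f h (swapC x y η)
        ≤ GG n d u x y f h ε₀ δ η + GG n d u x y f h ε₀ δ (swapC x y η) := by
    intro η
    cases hbx : η x with
    | true =>
      cases hby : η y with
      | true => exact diag_case n d hε₀ hu x y hf h hδ η (hbx.trans hby.symm)
      | false => exact main_case n d hε₀ hu x y hf hh hδ η hbx hby
    | false =>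
      cases hby : η y with
      | false => exact diag_case n d hε₀ hu x y hf h hδ η (hbx.trans hby.symm)
      | true =>
        have hne : y ≠ x := by
          intro e; rw [e, hbx] at hby; exact Bool.noConfusion hby
        have hη'x : swapC x y η x = true := by simp [swapC, hby]
        have hη'y : swapC x y η y = false := by simp [swapC, hne, hbx]
        have := main_case n d hε₀ hu x y hf hh hδ (swapC x y η) hη'x hη'y
        rw [hinv η] at this
        linarith
  have hsum : ∑ η : Config n d, gg n d u x y f h η
      ≤ ∑ η : Config n d, GG n d u x y f h ε₀ δ η := by
    have h1 := Finset.sum_le_sum (fun η (_ : η ∈ Finset.univ) => hpoint η)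
    have h2 : ∑ η : Config n d, gg n d u x y f h (swapC x y η)
        = ∑ η : Config n d, gg n d u x y f h η :=
      Function.Bijective.sum_comp (Function.Involutive.bijective (swapC_invol x y)) _
    have h3 : ∑ η : Config n d, GG n d u x y f h ε₀ δ (swapC x y η)
        = ∑ η : Config n d, GG n d u x y f h ε₀ δ η :=
      Function.Bijective.sum_comp (Function.Involutive.bijective (swapC_invol x y)) _
    rw [Finset.sum_add_distrib, Finset.sum_add_distrib, h2, h3] at h1
    linarith
  simp only [gg, GG] at hsum
  rw [Finset.sum_add_distrib, Finset.sum_add_distrib, ← Finset.mul_sum, ← Finset.mul_sum,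
    ← Finset.mul_sum] at hsum
  linarith
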